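/- Let 𝒳 ⊆ ℝ^d be compact convex, let φ : ℝ^d → ℝ be 1-strongly convex with respect to a norm ‖·‖ and L_0-Lipschitz on 𝒳, let μ > 0, and let y_1, …, y_T ∈ ℝ^d be arbitrary. Define the losses ℓ_0(x) = μ φ(x) and ℓ_t(x) = μ φ(x) + ⟨x, y_t⟩ for t ≥ 1, fix positive weights α_0, α_1, …, α_T with Ã_t = Σ_{s=0}^t α_s, and let the Be-The-Leader iterates be x_t = argmin_{x ∈ 𝒳} Σ_{s=0}^t α_s ℓ_s(x) for t ≥ 0 (so x_0 = argmin_{x ∈ 𝒳} φ(x)). Then for every x* ∈ 𝒳, Σ_{t=1}^T α_t ( ℓ_t(x_t) − ℓ_t(x*) ) ≤ α_0 μ L_0 ‖x* − x_0‖ − Σ_{t=1}^T (μ Ã_{t−1}/2) ‖x_{t−1} − x_t‖². -/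

import Mathlib

open scoped RealInnerProductSpace
open Finset

/-- regret bound for Be-The-Leader on the strongly convex losses
`ℓ_0 = μφ`, `ℓ_t(x) = μφ(x) + ⟪x, y_t⟫`: for every `x* ∈ 𝒳`,
`Σ_{t=1}^T α_t (ℓ_t(x_t) - ℓ_t(x*)) ≤ α_0 μ L_0 ‖x* - x_0‖ - Σ_t (μ Ã_{t-1}/2) ‖x_{t-1} - x_t‖²`. -/
theorem btl_strongly_convex_regret {d : ℕ}
    (X : Set (EuclideanSpace ℝ (Fin d)))
    (hXcomp : IsCompact X) (hXconv : Convex ℝ X)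
    (N : EuclideanSpace ℝ (Fin d) → ℝ)
    -- N is a norm
    (hN_add : ∀ u v, N (u + v) ≤ N u + N v)
    (hN_smul : ∀ (a : ℝ) (u : EuclideanSpace ℝ (Fin d)), N (a • u) = |a| * N u)
    (hN_zero : ∀ u, N u = 0 → u = 0)
    -- φ is differentiable, 1-strongly convex w.r.t. N, and L₀-Lipschitz on X
    (φ : EuclideanSpace ℝ (Fin d) → ℝ) (hφdiff : Differentiable ℝ φ)
    (hφsc : ∀ u v, φ u + ⟪gradient φ u, v - u⟫ + 1 / 2 * (N (v - u)) ^ 2 ≤ φ v)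
    (L0 : ℝ) (hL0 : ∀ u ∈ X, ∀ v ∈ X, |φ u - φ v| ≤ L0 * N (u - v))
    (μ : ℝ) (hμ : 0 < μ)
    (T : ℕ)
    (y : ℕ → EuclideanSpace ℝ (Fin d))
    -- the losses ℓ_0(x) = μφ(x), ℓ_t(x) = μφ(x) + ⟪x, y_t⟫
    (ℓ : ℕ → EuclideanSpace ℝ (Fin d) → ℝ)
    (hℓ0 : ∀ w, ℓ 0 w = μ * φ w)
    (hℓ : ∀ t, 1 ≤ t → ∀ w, ℓ t w = μ * φ w + ⟪w, y t⟫)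
    -- positive weights
    (α : ℕ → ℝ) (hα : ∀ t ≤ T, 0 < α t)
    (Atil : ℕ → ℝ) (hAtil : ∀ t, Atil t = ∑ s ∈ range (t + 1), α s)
    -- the Be-The-Leader iterates: x_t minimizes Σ_{s=0}^t α_s ℓ_s over X
    (x : ℕ → EuclideanSpace ℝ (Fin d))
    (hx : ∀ t ≤ T, x t ∈ X ∧ ∀ w ∈ X,
      ∑ s ∈ range (t + 1), α s * ℓ s (x t) ≤ ∑ s ∈ range (t + 1), α s * ℓ s w) :
    ∀ xstar ∈ X,
      ∑ t ∈ Icc 1 T, α t * (ℓ t (x t) - ℓ t xstar)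
        ≤ α 0 * μ * L0 * N (xstar - x 0)
          - ∑ t ∈ Icc 1 T, (μ * Atil (t - 1) / 2) * (N (x (t - 1) - x t)) ^ 2 := by
  intro xstar hxstar
  -- symmetry of N
  have hNsym : ∀ u v : EuclideanSpace ℝ (Fin d), N (u - v) = N (v - u) := by
    intro u v
    have h := hN_smul (-1) (v - u)
    simpa [neg_sub] using h
  -- midpoint strong convexity of φ
  have hA : ∀ θ : ℝ, 0 ≤ θ → θ ≤ 1 → ∀ u v : EuclideanSpace ℝ (Fin d),
      φ ((1-θ) • u + θ • v) + θ*(1-θ)/2 * (N (v-u))^2 ≤ (1-θ) * φ u + θ * φ v := by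
    intro θ hθ0 hθ1 u v
    set m : EuclideanSpace ℝ (Fin d) := (1-θ) • u + θ • v with hm
    have h1 := hφsc m u
    have h2 := hφsc m v
    have e1 : u - m = θ • (u - v) := by rw [hm]; module
    have e2 : v - m = (1-θ) • (v - u) := by rw [hm]; module
    rw [e1, hN_smul θ (u - v), abs_of_nonneg hθ0, real_inner_smul_right] at h1
    rw [e2, hN_smul (1-θ) (v - u), abs_of_nonneg (by linarith : (0:ℝ) ≤ 1-θ),
      real_inner_smul_right] at h2
    have hsy : N (u - v) = N (v - u) := hNsym u v
    rw [hsy] at h1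
    have hin : ⟪gradient φ m, u - v⟫ = -⟪gradient φ m, v - u⟫ := by
      rw [← neg_sub v u, inner_neg_right]
    rw [hin] at h1
    nlinarith [mul_le_mul_of_nonneg_left h1 (by linarith : (0:ℝ) ≤ 1-θ),
      mul_le_mul_of_nonneg_left h2 hθ0]
  -- per-loss combination inequality
  have hloss : ∀ (s : ℕ) (θ : ℝ), 0 ≤ θ → θ ≤ 1 → ∀ u v : EuclideanSpace ℝ (Fin d),
      ℓ s ((1-θ) • u + θ • v) + μ * (θ*(1-θ)/2 * (N (v-u))^2)
        ≤ (1-θ) * ℓ s u + θ * ℓ s v := by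
    intro s θ hθ0 hθ1 u v
    have hAuv := hA θ hθ0 hθ1 u v
    rcases Nat.eq_zero_or_pos s with hs | hs
    · subst hs
      rw [hℓ0, hℓ0, hℓ0]
      nlinarith [mul_le_mul_of_nonneg_left hAuv hμ.le]
    · rw [hℓ s hs, hℓ s hs, hℓ s hs]
      have hin : ⟪(1-θ) • u + θ • v, y s⟫ = (1-θ) * ⟪u, y s⟫ + θ * ⟪v, y s⟫ := by
        rw [inner_add_left, real_inner_smul_left, real_inner_smul_left]
      rw [hin]
      nlinarith [mul_le_mul_of_nonneg_left hAuv hμ.le]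
  -- nonnegativity of the cumulative weights
  have hAtnn : ∀ t ≤ T, 0 ≤ Atil t := by
    intro t ht
    rw [hAtil t]
    exact Finset.sum_nonneg fun s hs =>
      (hα s (le_trans (Nat.lt_succ_iff.mp (mem_range.mp hs)) ht)).le
  -- combination inequality for the aggregated objective
  have hcomb : ∀ t, t ≤ T → ∀ θ : ℝ, 0 ≤ θ → θ ≤ 1 → ∀ u v : EuclideanSpace ℝ (Fin d),
      (∑ s ∈ range (t+1), α s * ℓ s ((1-θ) • u + θ • v))
          + μ * Atil t * (θ*(1-θ)/2 * (N (v-u))^2)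
        ≤ (1-θ) * (∑ s ∈ range (t+1), α s * ℓ s u)
          + θ * (∑ s ∈ range (t+1), α s * ℓ s v) := by
    intro t ht θ hθ0 hθ1 u v
    have hterm : ∀ s ∈ range (t+1),
        α s * ℓ s ((1-θ) • u + θ • v) + α s * (μ * (θ*(1-θ)/2 * (N (v-u))^2))
          ≤ (1-θ) * (α s * ℓ s u) + θ * (α s * ℓ s v) := by
      intro s hs
      have hαs : 0 ≤ α s := (hα s (le_trans (Nat.lt_succ_iff.mp (mem_range.mp hs)) ht)).le
      nlinarith [mul_le_mul_of_nonneg_left (hloss s θ hθ0 hθ1 u v) hαs]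
    have hsum := Finset.sum_le_sum hterm
    rw [Finset.sum_add_distrib, ← Finset.sum_mul] at hsum
    rw [Finset.sum_add_distrib, ← Finset.mul_sum, ← Finset.mul_sum] at hsum
    have hkey : μ * Atil t * (θ*(1-θ)/2 * (N (v-u))^2)
        = (∑ s ∈ range (t+1), α s) * (μ * (θ*(1-θ)/2 * (N (v-u))^2)) := by
      rw [← hAtil t]; ring
    linarith [hsum, hkey.le, hkey.ge]
  -- strong minimality of the BTL iterate
  have hmin : ∀ t, t + 1 ≤ T →
      (∑ s ∈ range (t+1), α s * ℓ s (x t)) + μ * Atil t / 2 * (N (x t - x (t+1)))^2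
        ≤ ∑ s ∈ range (t+1), α s * ℓ s (x (t+1)) := by
    intro t ht
    have hu : x t ∈ X := (hx t (by omega)).1
    have hv : x (t+1) ∈ X := (hx (t+1) ht).1
    have hAt : 0 ≤ Atil t := hAtnn t (by omega)
    set K := μ * Atil t / 2 * (N (x t - x (t+1)))^2 with hK
    have hK0 : 0 ≤ K := by
      rw [hK]
      exact mul_nonneg (by positivity) (sq_nonneg _)
    refine le_of_forall_pos_le_add ?_
    intro ε hε
    set θ : ℝ := min 1 (ε / (K + 1)) with hθ
    have hθ0 : 0 < θ := lt_min one_pos (div_pos hε (by linarith))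
    have hθ1 : θ ≤ 1 := min_le_left _ _
    have hmem : (1-θ) • x t + θ • x (t+1) ∈ X :=
      hXconv hu hv (by linarith) hθ0.le (by ring)
    have hopt := (hx t (by omega)).2 _ hmem
    have hc := hcomb t (by omega) θ hθ0.le hθ1 (x t) (x (t+1))
    rw [hNsym (x (t+1)) (x t)] at hc
    have hKθ : K * θ ≤ ε := by
      have h1 : θ ≤ ε / (K + 1) := min_le_right _ _
      have h2 : K * θ ≤ K * (ε / (K + 1)) := mul_le_mul_of_nonneg_left h1 hK0
      have h3 : K * (ε / (K + 1)) ≤ ε := by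
        rw [mul_div_assoc']
        rw [div_le_iff₀ (by linarith : (0:ℝ) < K + 1)]
        nlinarith
      linarith
    -- from hc and hopt, dividing by θ
    have h4 : θ * ((∑ s ∈ range (t+1), α s * ℓ s (x t)) + K * (1-θ))
        ≤ θ * (∑ s ∈ range (t+1), α s * ℓ s (x (t+1))) := by
      rw [hK]
      nlinarith [hc, hopt]
    have h5 := le_of_mul_le_mul_left h4 hθ0
    linarith
  -- the telescoping induction
  have hind : ∀ t, t ≤ T →
      (∑ s ∈ Icc 1 t, α s * ℓ s (x s))
          + ∑ s ∈ Icc 1 t, (μ * Atil (s-1) / 2) * (N (x (s-1) - x s))^2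
        ≤ (∑ s ∈ range (t+1), α s * ℓ s (x t)) - α 0 * ℓ 0 (x 0) := by
    intro t
    induction t with
    | zero => intro _; simp
    | succ n ih =>
      intro ht
      have ihn := ih (by omega)
      rw [Finset.sum_Icc_succ_top (by omega : 1 ≤ n + 1),
        Finset.sum_Icc_succ_top (by omega : 1 ≤ n + 1),
        Finset.sum_range_succ]
      simp only [Nat.add_sub_cancel]
      have hm := hmin n ht
      linarith
  -- splitting range sums
  have hsp : ∀ (g : ℕ → ℝ) (n : ℕ),
      ∑ s ∈ range (n+1), g s = g 0 + ∑ s ∈ Icc 1 n, g s := by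
    intro g n
    induction n with
    | zero => simp
    | succ k ih =>
      rw [Finset.sum_range_succ, ih, Finset.sum_Icc_succ_top (by omega : 1 ≤ k + 1)]
      ring
  have h1 := hind T le_rfl
  have h2 := (hx T le_rfl).2 xstar hxstar
  have h3 := hsp (fun s => α s * ℓ s xstar) T
  have hx0 : x 0 ∈ X := (hx 0 (Nat.zero_le T)).1
  have hlip : α 0 * ℓ 0 xstar - α 0 * ℓ 0 (x 0) ≤ α 0 * μ * L0 * N (xstar - x 0) := by
    rw [hℓ0, hℓ0]
    have habs := hL0 xstar hxstar (x 0) hx0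
    have h6 : φ xstar - φ (x 0) ≤ L0 * N (xstar - x 0) := (abs_le.mp habs).2
    have hα0 : (0:ℝ) ≤ α 0 * μ := mul_nonneg (hα 0 (Nat.zero_le T)).le hμ.le
    nlinarith [mul_le_mul_of_nonneg_left h6 hα0]
  have hsub : ∑ t ∈ Icc 1 T, α t * (ℓ t (x t) - ℓ t xstar)
      = (∑ t ∈ Icc 1 T, α t * ℓ t (x t)) - ∑ t ∈ Icc 1 T, α t * ℓ t xstar := by
    rw [← Finset.sum_sub_distrib]
    exact Finset.sum_congr rfl fun t _ => by ring
  rw [hsub]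
  linarith
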